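/- Let (U₁, V₁, E₁, φ₁) and (U₂, V₂, E₂, φ₂) be labeled bipartite graphs. Let W be a finite set of natural numbers containing τ(d₁(u₁) + d₂(u₂)) for every u₁ ∈ U₁ and u₂ ∈ U₂. Define the polynomial-product graph with parts U₁ × U₂ and W by declaring (u₁, u₂) adjacent to n ∈ W iff Nat.testBit (d₁(u₁) + d₂(u₂)) n = true, and label W by the (injective) inclusion map W ↪ ℕ. Then the graph polynomial of this product graph equals P(E₁, φ₁) · P(E₂, φ₂). -/

import Mathlib

/-- `graphDeg E φ u = ∑_{v : E u v} 2 ^ (φ v)`. -/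
noncomputable def graphDeg {U V : Type*} [Fintype V]
    (E : U → V → Prop) (φ : V → ℕ) (u : U) : ℕ :=
  letI := Classical.dec
  ∑ v ∈ Finset.univ.filter (fun v => E u v), 2 ^ φ v

/-- The graph polynomial `P(E, φ) = ∑_{u : U} X ^ (graphDeg E φ u)` in `ℕ[x]`. -/
noncomputable def graphPoly {U V : Type*} [Fintype U] [Fintype V]
    (E : U → V → Prop) (φ : V → ℕ) : Polynomial ℕ :=
  ∑ u : U, Polynomial.X ^ graphDeg E φ u

lemma mem_bitIndices_iff_testBit (k i : ℕ) : i ∈ k.bitIndices ↔ k.testBit i = true := by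
  induction k using Nat.binaryRec generalizing i with
  | zero => simp
  | bit b n ih =>
    cases b with
    | false =>
      rw [Nat.bitIndices_bit_false]
      cases i with
      | zero => simp [Nat.testBit_bit_zero]
      | succ i =>
        rw [Nat.bit_false, Nat.testBit_succ, Nat.mul_div_cancel_left _ two_pos, ← ih,
          List.mem_map_of_injective (add_left_injective 1)]
    | true =>
      rw [Nat.bitIndices_bit_true]
      cases i with
      | zero =>
        simp only [Nat.bit_true, Nat.testBit_zero, List.mem_cons]
        simp [Nat.mul_add_mod]
      | succ i =>
        rw [Nat.bit_true, Nat.testBit_succ, show (2 * n + 1) / 2 = n by omega, ← ih,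
          List.mem_cons]
        simp [List.mem_map_of_injective (add_left_injective 1)]

lemma sum_bits (k : ℕ) (W : Finset ℕ)
    (h : ∀ n, k.testBit n = true → n ∈ W) :
    (letI := Classical.dec
    ∑ v ∈ Finset.univ.filter (fun v : W => k.testBit (v : ℕ) = true), 2 ^ (v : ℕ)) = k := by
  classical
  have h1 : ∑ v ∈ Finset.univ.filter (fun v : W => k.testBit (v : ℕ) = true), 2 ^ (v : ℕ)
      = ∑ n ∈ W.filter (fun n => k.testBit n = true), 2 ^ n := by
    rw [Finset.sum_filter, Finset.univ_eq_attach, Finset.sum_filter]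
    exact Finset.sum_attach W (fun n => if k.testBit n = true then 2 ^ n else 0)
  rw [Finset.filter_congr_decidable] at h1 ⊢
  rw [h1]
  have h2 : W.filter (fun n => k.testBit n = true) = k.bitIndices.toFinset := by
    ext n
    simp only [Finset.mem_filter, List.mem_toFinset, mem_bitIndices_iff_testBit]
    exact ⟨fun hh => hh.2, fun hh => ⟨h n hh, hh⟩⟩
  rw [h2, List.sum_toFinset _ (Nat.bitIndices_sorted.nodup), Nat.twoPowSum_bitIndices]

theorem graphPoly_polynomialProduct {U₁ V₁ U₂ V₂ : Type*}
    [Fintype U₁] [Fintype V₁] [Fintype U₂] [Fintype V₂]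
    (E₁ : U₁ → V₁ → Prop) (E₂ : U₂ → V₂ → Prop)
    (φ₁ : V₁ → ℕ) (φ₂ : V₂ → ℕ)
    (hφ₁ : Function.Injective φ₁) (hφ₂ : Function.Injective φ₂)
    (W : Finset ℕ)
    (hW : ∀ (u₁ : U₁) (u₂ : U₂) (n : ℕ),
      Nat.testBit (graphDeg E₁ φ₁ u₁ + graphDeg E₂ φ₂ u₂) n = true → n ∈ W) :
    graphPoly
      (fun (p : U₁ × U₂) (n : W) =>
        Nat.testBit (graphDeg E₁ φ₁ p.1 + graphDeg E₂ φ₂ p.2) (n : ℕ) = true)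
      (fun n : W => (n : ℕ))
    = graphPoly E₁ φ₁ * graphPoly E₂ φ₂ := by
  unfold graphPoly
  rw [Finset.sum_mul_sum]
  rw [← Finset.sum_product']
  rw [← Finset.univ_product_univ]
  refine Finset.sum_congr rfl fun p _ => ?_
  rw [← pow_add]
  congr 1
  show graphDeg _ _ p = _
  unfold graphDeg
  exact sum_bits (graphDeg E₁ φ₁ p.1 + graphDeg E₂ φ₂ p.2) W (hW p.1 p.2)
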